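/- Let n be a positive integer, write n = 2^k · m with m odd, and suppose m < 2^k (equivalently, the largest odd divisor of n is less than √n). Then there exists a finite abelian group of order n which admits no AP-destroying permutation. -/

import Mathlib

/-- A permutation `π` of a finite abelian group `G` is *AP-destroying* if it preserves no
3-term arithmetic progression `(a, a+r, a+2r)` with `r ≠ 0`, i.e. there are no `a, r` with
`r ≠ 0` and `π(a) - 2·π(a+r) + π(a+2r) = 0`. -/
def APDestroying {G : Type*} [AddCommGroup G] (π : Equiv.Perm G) : Prop :=
  ∀ a r : G, r ≠ 0 → π a - 2 • π (a + r) + π (a + 2 • r) ≠ 0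

theorem exists_group_without_apDestroying (n k m : ℕ) (hn : 0 < n)
    (hfac : n = 2 ^ k * m) (hm : Odd m) (hlt : m < 2 ^ k) :
    ∃ (G : Type) (inst : AddCommGroup G) (instF : Fintype G),
      @Fintype.card G instF = n ∧
      ∀ π : Equiv.Perm G, ¬ @APDestroying G inst π := by
  haveI : NeZero m := ⟨hm.pos.ne'⟩
  refine ⟨(Fin k → ZMod 2) × ZMod m, inferInstance, inferInstance, ?_, ?_⟩
  · simp [ZMod.card, hfac]
  · intro π hπ
    have hcard : Fintype.card (ZMod m) < Fintype.card (Fin k → ZMod 2) := by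
      simpa [ZMod.card] using hlt
    obtain ⟨v, w, hvw, heq⟩ :=
      Fintype.exists_ne_map_eq_of_card_lt
        (fun v : Fin k → ZMod 2 => (π (v, 0)).2) hcard
    set a : (Fin k → ZMod 2) × ZMod m := (w, 0) with ha
    set r : (Fin k → ZMod 2) × ZMod m := (v - w, 0) with hr
    have hr0 : r ≠ 0 := by
      intro h
      apply hvw
      have : v - w = 0 := congrArg Prod.fst h
      exact sub_eq_zero.mp this
    have h2 : ∀ x : ZMod 2, 2 • x = 0 := by decide
    have h2r : 2 • r = 0 := by
      refine Prod.ext ?_ ?_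
      · funext i; exact h2 _
      · simp [hr]
    have har : a + r = (v, 0) := by
      refine Prod.ext ?_ ?_
      · show w + (v - w) = v; abel
      · simp [ha, hr]
    apply hπ a r hr0
    have ha2r : a + 2 • r = a := by rw [h2r, add_zero]
    rw [ha2r, har]
    have key : π a - 2 • π (v, 0) + π a = 2 • (π a - π (v, 0)) := by abel
    rw [key]
    refine Prod.ext ?_ ?_
    · funext i; exact h2 _
    · show 2 • ((π a).2 - (π (v, 0)).2) = 0
      have : (π (v, 0)).2 = (π a).2 := heq
      rw [this, sub_self, smul_zero]
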